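/- arXiv:1706.00407 — 2 statements merged into one kernel-verified Lean document; each statement's English description precedes it below -/
import Mathlib

section
/- For all integers m and all positive integers n, F_m * (sum over k from 1 to n of (-1)^{mk-1} L_{2mk}) = (-1)^{mn-1} F_{mn} L_{mn+m}. -/
/-- Fibonacci numbers extended to all integers via `F_{-n} = (-1)^{n-1} F_n`. -/
def fibZ (n : ℤ) : ℤ :=
  if 0 ≤ n then (Nat.fib n.toNat : ℤ) else (-1) ^ ((-n).toNat + 1) * (Nat.fib (-n).toNat : ℤ)

/-- Lucas numbers extended to all integers, `L_n = F_{n-1} + F_{n+1}`. -/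
def lucasZ (n : ℤ) : ℤ := fibZ (n - 1) + fibZ (n + 1)


lemma fibZ_natCast (k : ℕ) : fibZ k = Nat.fib k := by simp [fibZ]

lemma fibZ_neg_natCast (k : ℕ) : fibZ (-(k:ℤ)) = (-1)^(k+1) * Nat.fib k := by
  rcases Nat.eq_zero_or_pos k with rfl | hk
  · simp [fibZ]
  · have h : ¬ (0 ≤ -(k:ℤ)) := by omega
    simp [fibZ, h]

lemma fibZ_rec (n : ℤ) : fibZ (n + 2) = fibZ (n + 1) + fibZ n := by
  obtain ⟨k, rfl | rfl⟩ := Int.eq_nat_or_neg n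
  · rw [show (k:ℤ) + 2 = ((k+2:ℕ):ℤ) by push_cast; ring,
        show (k:ℤ) + 1 = ((k+1:ℕ):ℤ) by push_cast; ring,
        fibZ_natCast, fibZ_natCast, fibZ_natCast, Nat.fib_add_two]
    push_cast; ring
  · match k with
    | 0 => decide
    | 1 => decide
    | 2 => decide
    | (j+3) =>
      rw [show -((j+3:ℕ):ℤ) + 2 = -((j+1:ℕ):ℤ) by push_cast; ring,
          show -((j+3:ℕ):ℤ) + 1 = -((j+2:ℕ):ℤ) by push_cast; ring,
          fibZ_neg_natCast, fibZ_neg_natCast, fibZ_neg_natCast,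
          show Nat.fib (j+3) = Nat.fib (j+1) + Nat.fib (j+2) by
            rw [show j+3 = j+1+2 by ring, Nat.fib_add_two]]
      push_cast; ring

lemma fibZ_zero : fibZ 0 = 0 := by decide
lemma fibZ_one : fibZ 1 = 1 := by decide
lemma fibZ_two : fibZ 2 = 1 := by decide

lemma fibZ_neg (n : ℤ) : fibZ (-n) = ((-1:ℤˣ)^(n+1) : ℤˣ) * fibZ n := by
  obtain ⟨k, rfl | rfl⟩ := Int.eq_nat_or_neg n
  · rw [fibZ_neg_natCast, fibZ_natCast]
    rw [show ((k:ℤ)+1) = ((k+1:ℕ):ℤ) by push_cast; ring, zpow_natCast]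
    push_cast
    ring
  · rw [neg_neg, fibZ_neg_natCast, fibZ_natCast]
    have h2 : ((-1:ℤˣ))^(2*(k:ℤ)) = 1 := by
      rw [zpow_mul]
      rw [show ((-1:ℤˣ))^(2:ℤ) = 1 by rw [zpow_two]; simp, one_zpow]
    have h3 : ((-1:ℤˣ))^(-(k:ℤ)+1) = (-1)^(k+1) := by
      rw [show (-(k:ℤ)+1) = ((k+1:ℕ):ℤ) - 2*k by push_cast; ring, zpow_sub, h2, zpow_natCast]
      simp
    rw [h3]
    have h4 : ((-1:ℤ))^(k+1) * ((-1:ℤ))^(k+1) = 1 := by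
      rw [← pow_add]
      exact Even.neg_one_pow ⟨k+1, by ring⟩
    push_cast
    rw [← mul_assoc, h4, one_mul]

lemma fib_addZ (x y : ℤ) : fibZ (x + y + 1) = fibZ (x+1) * fibZ (y+1) + fibZ x * fibZ y := by
  set P : ℤ → Prop := fun y => fibZ (x + y + 1) = fibZ (x+1) * fibZ (y+1) + fibZ x * fibZ y with hP
  suffices H : ∀ y : ℤ, P y ∧ P (y + 1) from (H y).1
  intro y
  induction y using Int.induction_on with
  | zero =>
    constructor
    · show fibZ (x + 0 + 1) = fibZ (x+1) * fibZ (0+1) + fibZ x * fibZ 0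
      norm_num [fibZ_one, fibZ_zero]
    · show fibZ (x + (0+1) + 1) = fibZ (x+1) * fibZ ((0+1)+1) + fibZ x * fibZ (0+1)
      rw [show x + (0+1) + 1 = x + 2 by ring, fibZ_rec]
      norm_num [fibZ_one, fibZ_two]
  | succ i ih =>
    refine ⟨ih.2, ?_⟩
    have h1 : P i := ih.1
    have h2 : P (i+1) := ih.2
    show fibZ (x + (i+1+1) + 1) = fibZ (x+1) * fibZ ((i+1+1)+1) + fibZ x * fibZ (i+1+1)
    have ha : fibZ (x + (i+1+1) + 1) = fibZ (x + (i+1) + 1) + fibZ (x + i + 1) := by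
      rw [show x + (i+1+1) + 1 = (x + i + 1) + 2 by ring, fibZ_rec,
          show x + i + 1 + 1 = x + (i+1) + 1 by ring]
    have hb : fibZ ((i+1+1)+1) = fibZ ((i+1)+1) + fibZ (i+1) := by
      rw [show (i:ℤ)+1+1+1 = (i+1) + 2 by ring, fibZ_rec]
    have hc : fibZ (i+1+1) = fibZ (i+1) + fibZ i := by
      rw [show (i:ℤ)+1+1 = i + 2 by ring, fibZ_rec]
    rw [ha, h1, h2, hb, hc]; ring
  | pred i ih =>
    refine ⟨?_, by rw [show -(i:ℤ)-1+1 = -i by ring]; exact ih.1⟩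
    have h1 : P (-i) := ih.1
    have h2 : P (-i+1) := ih.2
    show fibZ (x + (-i-1) + 1) = fibZ (x+1) * fibZ ((-i-1)+1) + fibZ x * fibZ (-i-1)
    have ha : fibZ (x + (-i-1) + 1) = fibZ (x + (-i+1) + 1) - fibZ (x + (-i) + 1) := by
      have := fibZ_rec (x + (-i-1) + 1)
      rw [show x + (-i-1) + 1 + 2 = x + (-i+1) + 1 by ring,
          show x + (-i-1) + 1 + 1 = x + (-i) + 1 by ring] at this
      linarith
    have hb : fibZ ((-i-1)+1) = fibZ ((-i+1)+1) - fibZ ((-i)+1) := by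
      have := fibZ_rec (-i-1+1)
      rw [show (-i:ℤ)-1+1+2 = (-i+1)+1 by ring, show (-i:ℤ)-1+1+1 = (-i)+1 by ring] at this
      linarith
    have hc : fibZ (-i-1) = fibZ ((-i)+1) - fibZ (-i) := by
      have := fibZ_rec (-i-1)
      rw [show (-i:ℤ)-1+2 = (-i)+1 by ring, show (-i:ℤ)-1+1 = (-i:ℤ) by ring] at this
      linarith
    rw [ha, h1, h2, hb, hc]; ring

def eps (e : ℤ) : ℤ := ((-1:ℤˣ)^e : ℤˣ)

lemma eps_def (e : ℤ) : (((-1:ℤˣ)^e : ℤˣ) : ℤ) = eps e := rfl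

lemma eps_two : ((-1:ℤˣ))^(2:ℤ) = 1 := by rw [zpow_two]; simp

lemma eps_even (a : ℤ) : ((-1:ℤˣ))^(2*a) = 1 := by rw [zpow_mul, eps_two, one_zpow]

lemma eps_split (s t : ℤ) : eps (s+t) = eps s * eps t := by
  unfold eps; rw [zpow_add]; rfl

lemma eps_neg_one : eps (-1) = -1 := by unfold eps; simp

lemma eps_one : eps 1 = -1 := by unfold eps; simp

lemma fibZ_neg' (n : ℤ) : fibZ (-n) = eps (n+1) * fibZ n := fibZ_neg n

lemma FL (x y : ℤ) : fibZ x * lucasZ y = fibZ (x+y) + eps y * fibZ (x-y) := by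
  have h1 : fibZ (x+y) = fibZ (x+1) * fibZ y + fibZ x * fibZ (y-1) := by
    have := fib_addZ x (y-1)
    rw [show x + (y-1) + 1 = x + y by ring, show y - 1 + 1 = y by ring] at this
    exact this
  have h2 : fibZ (x-y) = fibZ (x+1) * fibZ (-y) + fibZ x * fibZ (-y-1) := by
    have := fib_addZ x (-y-1)
    rw [show x + (-y-1) + 1 = x - y by ring, show -y-1+1 = -y by ring] at this
    exact this
  have h3 : fibZ (-y) = eps (y+1) * fibZ y := fibZ_neg' y
  have h4 : fibZ (-y-1) = eps (y+2) * fibZ (y+1) := by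
    have := fibZ_neg' (y+1)
    rw [show -(y+1) = -y-1 by ring] at this
    rw [this, show y+1+1 = y+2 by ring]
  have e1 : eps y * eps (y+1) = -1 := by
    rw [← eps_split, show y + (y+1) = 2*y + 1 by ring, eps_split]
    unfold eps
    rw [eps_even]
    simp
  have e2 : eps y * eps (y+2) = 1 := by
    rw [← eps_split, show y + (y+2) = 2*(y+1) by ring]
    unfold eps
    rw [eps_even]
    rfl
  rw [lucasZ, h1, h2, h3, h4]
  linear_combination (-(fibZ (x+1) * fibZ y)) * e1 + (-(fibZ x * fibZ (y+1))) * e2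

lemma key (m a : ℤ) :
    eps (a-1) * (fibZ a * lucasZ (a+m)) + eps (a+m-1) * (fibZ m * lucasZ (2*a+2*m))
      = eps (a+m-1) * (fibZ (a+m) * lucasZ (a+2*m)) := by
  have h1 : fibZ a * lucasZ (a+m) = fibZ (2*a+m) + eps (a+m) * fibZ (-m) := by
    have := FL a (a+m)
    rw [show a+(a+m) = 2*a+m by ring, show a-(a+m) = -m by ring] at this
    exact this
  have h2 : fibZ m * lucasZ (2*a+2*m)
      = fibZ (2*a+3*m) + eps (2*a+2*m) * fibZ (-(2*a+m)) := by
    have := FL m (2*a+2*m)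
    rw [show m+(2*a+2*m) = 2*a+3*m by ring, show m-(2*a+2*m) = -(2*a+m) by ring] at this
    exact this
  have h3 : fibZ (a+m) * lucasZ (a+2*m) = fibZ (2*a+3*m) + eps (a+2*m) * fibZ (-m) := by
    have := FL (a+m) (a+2*m)
    rw [show a+m+(a+2*m) = 2*a+3*m by ring, show a+m-(a+2*m) = -m by ring] at this
    exact this
  have h4 : fibZ (-m) = eps (m+1) * fibZ m := fibZ_neg' m
  have h5 : fibZ (-(2*a+m)) = eps (2*a+m+1) * fibZ (2*a+m) := fibZ_neg' _
  rw [h1, h2, h3, h4, h5]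
  rw [show a - 1 = a + (-1) by ring,
      show a + m - 1 = a + (m + -1) by ring,
      show 2*a+2*m = a + (a + (m + m)) by ring,
      show 2*a+m+1 = a + (a + (m + 1)) by ring,
      show a+2*m = a + (m+m) by ring]
  simp only [eps_split, eps_neg_one, eps_one]
  obtain hu|hu := Int.units_eq_one_or ((-1:ℤˣ)^m) <;>
    obtain hv|hv := Int.units_eq_one_or ((-1:ℤˣ)^a) <;>
      simp only [eps, hu, hv, Units.val_one, Units.val_neg] <;> ring


theorem stmt7 (m : ℤ) (n : ℕ) (hn : 0 < n) :
    fibZ m * ∑ k ∈ Finset.Icc 1 n, ((((-1 : ℤˣ) ^ (m * k - 1) : ℤˣ)) : ℤ) * lucasZ (2 * m * k)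
      = ((((-1 : ℤˣ) ^ (m * n - 1) : ℤˣ)) : ℤ) * fibZ (m * n) * lucasZ (m * n + m) := by
  simp only [eps_def]
  induction n, hn using Nat.le_induction with
  | base =>
    rw [Finset.Icc_self, Finset.sum_singleton]
    simp only [Nat.cast_one, mul_one]
    rw [show m + m = 2*m by ring]
    ring
  | succ n hn IH =>
    rw [Finset.sum_Icc_succ_top (by omega : 1 ≤ n+1), mul_add, IH]
    push_cast
    rw [show m*((n:ℤ)+1) = m*(n:ℤ) + m by ring,
        show 2*m*((n:ℤ)+1) = 2*(m*(n:ℤ))+2*m by ring,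
        show m*(n:ℤ)+m+m = m*(n:ℤ)+2*m by ring]
    linear_combination key m (m*(n:ℤ))
end

section
/- For all integers m and all positive integers n, 5 L_m L_{2m} * (sum over k from 1 to n of (-1)^{k-1} F_{mk}^4) = F_{mn} F_{mn+m} * ((-1)^{n-1} L_m L_{mn} L_{mn+m} + 4(-1)^{n(m-1)} L_{2m}). -/
open scoped goldenRatio

lemma fibZ_real (t : ℤ) : (fibZ t : ℝ) = (φ ^ t - ψ ^ t) / Real.sqrt 5 := by
  rcases le_or_gt 0 t with h | h
  · obtain ⟨j, rfl⟩ := Int.eq_ofNat_of_zero_le h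
    rw [fibZ, if_pos h, zpow_natCast, zpow_natCast]
    simpa using Real.coe_fib_eq j
  · have hneg : ¬ (0 ≤ t) := not_le.mpr h
    rw [fibZ, if_neg hneg]
    set j := (-t).toNat with hj
    have ht : t = -(j : ℤ) := by
      rw [hj]; omega
    have hmul : φ ^ j * ψ ^ j = (-1 : ℝ) ^ j := by
      rw [← mul_pow, Real.goldenRatio_mul_goldenConj]
    have hphi : (φ ^ (j:ℤ))⁻¹ = (-1 : ℝ) ^ j * ψ ^ j := by
      rw [zpow_natCast]
      refine inv_eq_of_mul_eq_one_right ?_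
      rw [mul_comm ((-1:ℝ)^j), ← mul_assoc, hmul, ← mul_pow]
      norm_num
    have hpsi : (ψ ^ (j:ℤ))⁻¹ = (-1 : ℝ) ^ j * φ ^ j := by
      rw [zpow_natCast]
      refine inv_eq_of_mul_eq_one_right ?_
      have hsq : ((-1:ℝ)^j)*((-1:ℝ)^j) = 1 := by rw [← mul_pow]; norm_num
      linear_combination ((-1:ℝ)^j) * hmul + hsq
    rw [ht, zpow_neg, zpow_neg, hphi, hpsi]
    push_cast
    rw [Real.coe_fib_eq j]
    ring
lemma lucasZ_real (t : ℤ) : (lucasZ t : ℝ) = φ ^ t + ψ ^ t := by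
  have h5 : Real.sqrt 5 ≠ 0 := by positivity
  have hgold : (φ:ℝ) ≠ 0 := Real.goldenRatio_ne_zero
  have hconj : (ψ:ℝ) ≠ 0 := Real.goldenConj_ne_zero
  rw [lucasZ]
  push_cast
  rw [fibZ_real, fibZ_real]
  rw [zpow_sub₀ hgold, zpow_add₀ hgold, zpow_sub₀ hconj, zpow_add₀ hconj, zpow_one, zpow_one]
  rw [← add_div, div_eq_iff h5]
  have h1 : (φ:ℝ)⁻¹ = -ψ := Real.inv_goldenRatio
  have h2 : (ψ:ℝ)⁻¹ = -φ := Real.inv_goldenConj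
  have h3 : (φ:ℝ) - ψ = Real.sqrt 5 := Real.goldenRatio_sub_goldenConj
  rw [div_eq_mul_inv, div_eq_mul_inv, h1, h2]
  linear_combination (φ ^ t + ψ ^ t) * h3

lemma sgn_real (z : ℤ) : ((((-1 : ℤˣ) ^ z : ℤˣ) : ℤ) : ℝ) = (-1 : ℝ) ^ z := by
  rcases Int.even_or_odd z with h | h
  · rw [h.neg_one_zpow, h.neg_one_zpow]; simp
  · rw [h.neg_one_zpow]
    obtain ⟨c, rfl⟩ := h
    have : ((-1 : ℤˣ)) ^ (2 * c + 1) = -1 := by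
      have h2 : ((-1 : ℤˣ)) ^ (2 : ℤ) = 1 := by
        rw [show (2:ℤ) = 1 + 1 from rfl, zpow_add, zpow_one]; simp
      rw [zpow_add, zpow_mul, h2, one_zpow, zpow_one, one_mul]
    rw [Odd.neg_one_zpow ⟨c, rfl⟩]
    simp

lemma key_s13 (A B e : ℝ) (he : A * B = e) (he2 : e * e = 1) :
    ∀ n : ℕ, 0 < n →
    (A + B) * (A ^ 2 + B ^ 2) * ∑ k ∈ Finset.Icc 1 n, (-1 : ℝ) ^ (k - 1) * (A ^ k - B ^ k) ^ 4
      = (A ^ n - B ^ n) * (A ^ (n + 1) - B ^ (n + 1)) *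
        ((-1 : ℝ) ^ (n - 1) * (A + B) * (A ^ n + B ^ n) * (A ^ (n + 1) + B ^ (n + 1))
          + 4 * (-1 : ℝ) ^ n * e ^ n * (A ^ 2 + B ^ 2)) := by
  have hq : A ^ 2 * B ^ 2 = 1 := by
    have : (A * B) * (A * B) = 1 := by rw [he]; exact he2
    linear_combination this
  intro n hn
  induction n, hn using Nat.le_induction with
  | base =>
      simp only [Finset.Icc_self, Finset.sum_singleton]
      norm_num
      linear_combination (-4 * (A - B) ^ 2 * (A + B) * (A ^ 2 + B ^ 2)) * he
  | succ n hn ih =>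
      obtain ⟨j, rfl⟩ : ∃ j, n = j + 1 := ⟨n - 1, (Nat.succ_pred_eq_of_pos hn).symm⟩
      rw [Finset.sum_Icc_succ_top (by omega : 1 ≤ j + 1 + 1)]
      simp only [Nat.add_sub_cancel] at ih ⊢
      have hXY : A ^ j * B ^ j = e ^ j := by rw [← mul_pow, he]
      linear_combination ih
        + ((-1:ℝ)^j * ((4)*B^5*(B^j)^2*(e^j) + (4)*B^7*(B^j)^2*e*(e^j) + (-4)*A*B^4*(A^j)*(B^j)*(e^j) + (4)*A*B^8*(B^j)^2*(e^j) + (4)*A^2*B^3*(B^j)^2*(e^j) + (-4)*A^2*B^3*(A^j)*(B^j)*(e^j) + (4)*A^2*B^5*(B^j)^2*e*(e^j) + (-4)*A^2*B^5*(A^j)*(B^j)*e*(e^j) + (-4)*A^3*B^2*(A^j)*(B^j)*(e^j) + (4)*A^3*B^2*(A^j)^2*(e^j) + (-4)*A^3*B^4*(A^j)*(B^j)*e*(e^j) + (4)*A^3*B^6*(B^j)^2*(e^j) + (-4)*A^3*B^6*(A^j)*(B^j)*(e^j) + (-4)*A^4*B*(A^j)*(B^j)*(e^j) + (-4)*A^4*B^3*(A^j)*(B^j)*e*(e^j)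 + (-4)*A^4*B^5*(A^j)*(B^j)*(e^j) + (4)*A^5*(A^j)^2*(e^j) + (-4)*A^5*B^2*(A^j)*(B^j)*e*(e^j) + (4)*A^5*B^2*(A^j)^2*e*(e^j) + (-4)*A^5*B^4*(A^j)*(B^j)*(e^j) + (-4)*A^6*B^3*(A^j)*(B^j)*(e^j) + (4)*A^6*B^3*(A^j)^2*(e^j) + (4)*A^7*(A^j)^2*e*(e^j) + (4)*A^8*B*(A^j)^2*(e^j))) * he
        + ((-1:ℝ)^j * ((4)*A*B^6*(B^j)^2 + (-4)*A^2*B^5*(A^j)*(B^j) + (4)*A^2*B^9*(B^j)^2 + (4)*A^3*B^4*(B^j)^2 + (-4)*A^3*B^4*(A^j)*(B^j) + (-4)*A^4*B^3*(A^j)*(B^j) + (4)*A^4*B^3*(A^j)^2 + (4)*A^4*B^7*(B^j)^2 + (-4)*A^4*B^7*(A^j)*(B^j) + (-4)*A^5*B^2*(A^j)*(B^j) + (-4)*A^5*B^6*(A^j)*(B^j) + (4)*A^6*B*(A^j)^2 + (-4)*A^6*B^5*(A^j)*(B^j) + (-4)*A^7*B^4*(A^j)*(B^j) + (4)*A^7*B^4*(A^j)^2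 + (4)*A^9*B^2*(A^j)^2)) * hXY
        + (-(-1:ℝ)^j * ((1)*B^7*(B^j)^4 + (1)*A*B^6*(B^j)^4 + (-4)*A*B^6*(A^j)*(B^j)^3 + (3)*A^2*B^5*(A^j)^2*(B^j)^2 + (-4)*A^3*B^4*(A^j)*(B^j)^3 + (3)*A^3*B^4*(A^j)^2*(B^j)^2 + (3)*A^4*B^3*(A^j)^2*(B^j)^2 + (-4)*A^4*B^3*(A^j)^3*(B^j) + (3)*A^5*B^2*(A^j)^2*(B^j)^2 + (-4)*A^6*B*(A^j)^3*(B^j) + (1)*A^6*B*(A^j)^4 + (1)*A^7*(A^j)^4)) * hq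

theorem stmt13 (m : ℤ) (n : ℕ) (hn : 0 < n) :
    5 * lucasZ m * lucasZ (2 * m)
        * ∑ k ∈ Finset.Icc 1 n, (((-1 : ℤˣ) ^ ((k : ℤ) - 1) : ℤˣ) : ℤ) * fibZ (m * k) ^ 4
      = fibZ (m * n) * fibZ (m * n + m)
        * ((((-1 : ℤˣ) ^ ((n : ℤ) - 1) : ℤˣ) : ℤ) * lucasZ m * lucasZ (m * n) * lucasZ (m * n + m)
            + 4 * (((-1 : ℤˣ) ^ ((n : ℤ) * (m - 1)) : ℤˣ) : ℤ) * lucasZ (2 * m)) := by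
  have h5pos : (0:ℝ) ≤ 5 := by norm_num
  have hs : Real.sqrt 5 * Real.sqrt 5 = 5 := Real.mul_self_sqrt h5pos
  have hsne : Real.sqrt 5 ≠ 0 := by positivity
  set A : ℝ := φ ^ m with hA
  set B : ℝ := ψ ^ m with hB
  set e : ℝ := (-1:ℝ) ^ m with hE
  have hABe : A * B = e := by rw [hA, hB, hE, ← mul_zpow, Real.goldenRatio_mul_goldenConj]
  have he2 : e * e = 1 := by
    rw [hE, ← mul_zpow]; norm_num
  have hf : ∀ k : ℕ, (fibZ (m * k) : ℝ) = (A ^ k - B ^ k) / Real.sqrt 5 := by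
    intro k
    rw [fibZ_real, zpow_mul, zpow_mul, zpow_natCast, zpow_natCast]
  have hl : ∀ k : ℕ, (lucasZ (m * k) : ℝ) = A ^ k + B ^ k := by
    intro k
    rw [lucasZ_real, zpow_mul, zpow_mul, zpow_natCast, zpow_natCast]
  have hl1 : (lucasZ m : ℝ) = A + B := by
    have := hl 1
    rw [show (m * ((1:ℕ):ℤ)) = m by push_cast; ring] at this
    simpa using this
  have hl2 : (lucasZ (2 * m) : ℝ) = A ^ 2 + B ^ 2 := by
    have := hl 2
    rw [show (m * ((2:ℕ):ℤ)) = 2 * m by push_cast; ring] at this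
    simpa using this
  have hfn : (fibZ (m * n) : ℝ) = (A ^ n - B ^ n) / Real.sqrt 5 := hf n
  have hfn1 : (fibZ (m * n + m) : ℝ) = (A ^ (n+1) - B ^ (n+1)) / Real.sqrt 5 := by
    have := hf (n+1)
    rw [show (m * ((n+1:ℕ):ℤ)) = m * n + m by push_cast; ring] at this
    exact this
  have hln : (lucasZ (m * n) : ℝ) = A ^ n + B ^ n := hl n
  have hln1 : (lucasZ (m * n + m) : ℝ) = A ^ (n+1) + B ^ (n+1) := by
    have := hl (n+1)
    rw [show (m * ((n+1:ℕ):ℤ)) = m * n + m by push_cast; ring] at this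
    exact this
  have hsgn_n : ((((-1 : ℤˣ) ^ ((n : ℤ) - 1) : ℤˣ) : ℤ) : ℝ) = (-1:ℝ) ^ (n - 1) := by
    rw [show (n:ℤ) - 1 = ((n - 1 : ℕ) : ℤ) by omega, sgn_real, zpow_natCast]
  have hsgn_nm : ((((-1 : ℤˣ) ^ ((n : ℤ) * (m - 1)) : ℤˣ) : ℤ) : ℝ) = (-1:ℝ) ^ n * e ^ n := by
    rw [sgn_real, mul_comm (n:ℤ) (m-1), zpow_mul, zpow_natCast]
    have h : (-1:ℝ) ^ (m - 1) = -e := by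
      rw [hE, zpow_sub₀ (by norm_num : (-1:ℝ) ≠ 0), zpow_one]
      ring
    rw [h, neg_pow]
  rw [← @Int.cast_inj ℝ]
  push_cast
  rw [hl1, hl2, hfn, hfn1, hln, hln1, hsgn_n, hsgn_nm]
  have h25 : (Real.sqrt 5) ^ 4 = 25 := by
    rw [show (Real.sqrt 5) ^ 4 = ((Real.sqrt 5) ^ 2) ^ 2 by ring, Real.sq_sqrt h5pos]; norm_num
  have hsum : ∑ k ∈ Finset.Icc 1 n, ((((-1:ℤˣ) ^ ((k:ℤ) - 1) : ℤˣ) : ℤ) : ℝ) * ((fibZ (m * k) : ℝ)) ^ 4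
      = (∑ k ∈ Finset.Icc 1 n, (-1:ℝ) ^ (k - 1) * (A ^ k - B ^ k) ^ 4) / 25 := by
    rw [Finset.sum_div]
    refine Finset.sum_congr rfl ?_
    intro k hk
    have hk1 : 1 ≤ k := (Finset.mem_Icc.mp hk).1
    rw [hf k, show (k:ℤ) - 1 = ((k - 1 : ℕ) : ℤ) by omega, sgn_real, zpow_natCast]
    rw [div_pow, h25, mul_div_assoc]
  rw [hsum]
  have hkey := key_s13 A B e hABe he2 n hn
  rw [div_mul_div_comm, hs]
  linear_combination (1/5 : ℝ) * hkey
end
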